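/- For every real γ > 1/4, the quantity ∑_{n=1}^∞ ∫_0^∞ n² / ( (1+λ)^{2γ} · (n² + λ)² ) dλ is finite. -/

import Mathlib

open MeasureTheory Real Set

theorem sum_integral_finite (γ : ℝ) (hγ : 1/4 < γ) :
    (∑' n : ℕ+, ∫⁻ l in Set.Ioi (0 : ℝ),
        ENNReal.ofReal ((n : ℝ) ^ 2 / ((1 + l) ^ (2 * γ) * ((n : ℝ) ^ 2 + l) ^ 2)))
      < ⊤ := by
  set b : ℝ := min γ (3/4) with hbdef
  have hb1 : 1/4 < b := lt_min hγ (by norm_num)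
  have hb2 : b ≤ 3/4 := min_le_right _ _
  have hbγ : b ≤ γ := min_le_left _ _
  set a : ℝ := 5/4 + b with hadef
  set p : ℝ := 2 - 2*a with hpdef
  set q : ℝ := a - 2*γ - 2 with hqdef
  have hp : p < -1 := by simp only [hpdef, hadef]; linarith
  have hq : q < -1 := by simp only [hqdef, hadef]; linarith
  have ha0 : (0:ℝ) ≤ a := by simp only [hadef]; linarith
  have ha2 : a ≤ 2 := by simp only [hadef]; linarith
  -- pointwise bound
  have key : ∀ (N l : ℝ), 1 ≤ N → 0 < l →
      N ^ 2 / ((1 + l) ^ (2*γ) * (N ^ 2 + l) ^ 2) ≤ N ^ p * (1 + l) ^ q := by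
    intro N l hN hl
    have hN0 : (0:ℝ) < N := lt_of_lt_of_le one_pos hN
    have h1l : (0:ℝ) < 1 + l := by linarith
    have hNl : (0:ℝ) < N ^ 2 + l := by positivity
    have hD : (0:ℝ) < (1 + l) ^ (2*γ) * (N ^ 2 + l) ^ 2 := by positivity
    rw [div_le_iff₀ hD]
    have c1 : N ^ (2*a) * (1 + l) ^ (2 - a) ≤ (N ^ 2 + l) ^ 2 := by
      have e : ((N ^ 2 + l)) ^ 2 = (N ^ 2 + l) ^ a * (N ^ 2 + l) ^ (2 - a) := by
        rw [← Real.rpow_add hNl]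
        norm_num [Real.rpow_two]
      rw [e]
      have e2 : N ^ (2*a) = (N ^ 2) ^ a := by
        rw [← Real.rpow_natCast N 2, ← Real.rpow_mul hN0.le]
        norm_num
      rw [e2]
      have hN21 : (1:ℝ) ≤ N ^ 2 := by nlinarith
      have hA : (N ^ 2) ^ a ≤ (N ^ 2 + l) ^ a :=
        Real.rpow_le_rpow (by positivity) (by linarith) ha0
      have hB : (1 + l) ^ (2 - a) ≤ (N ^ 2 + l) ^ (2 - a) :=
        Real.rpow_le_rpow (by linarith) (by linarith) (by linarith)
      exact mul_le_mul hA hB (by positivity) (by positivity)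
    calc N ^ 2 = N ^ p * N ^ (2*a) * ((1 + l) ^ q * (1 + l) ^ (2*γ) * (1 + l) ^ (2 - a)) := by
          rw [← Real.rpow_add hN0, ← Real.rpow_add h1l, ← Real.rpow_add h1l]
          have : p + 2*a = 2 := by simp only [hpdef]; ring
          have h2 : q + 2*γ + (2 - a) = 0 := by simp only [hqdef]; ring
          rw [this, h2, Real.rpow_zero, mul_one, Real.rpow_two]
      _ ≤ N ^ p * (1 + l) ^ q * ((1 + l) ^ (2*γ) * ((N ^ 2 + l) ^ 2)) := by
          rw [show N ^ p * N ^ (2*a) * ((1 + l) ^ q * (1 + l) ^ (2*γ) * (1 + l) ^ (2 - a))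
              = N ^ p * (1 + l) ^ q * ((1 + l) ^ (2*γ) * (N ^ (2*a) * (1 + l) ^ (2 - a))) by ring]
          gcongr
  -- the λ-integral of (1+l)^q is finite
  set C : ENNReal := ∫⁻ l in Set.Ioi (0:ℝ), ENNReal.ofReal ((1 + l) ^ q) with hCdef
  have hC : C < ⊤ := by
    have hsplit : Set.Ioi (0:ℝ) = Set.Ioc (0:ℝ) 1 ∪ Set.Ioi 1 :=
      (Set.Ioc_union_Ioi_eq_Ioi (by norm_num)).symm
    rw [hCdef, hsplit, lintegral_union measurableSet_Ioi Set.Ioc_disjoint_Ioi_same]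
    have h1 : (∫⁻ l in Set.Ioc (0:ℝ) 1, ENNReal.ofReal ((1 + l) ^ q)) ≤ 1 := by
      have : (∫⁻ l in Set.Ioc (0:ℝ) 1, ENNReal.ofReal ((1 + l) ^ q))
          ≤ ∫⁻ _ in Set.Ioc (0:ℝ) 1, 1 := by
        refine setLIntegral_mono measurable_const fun x hx => ?_
        have hx0 : 0 < x := hx.1
        have : (1 + x) ^ q ≤ 1 :=
          Real.rpow_le_one_of_one_le_of_nonpos (by linarith) (by linarith)
        calc ENNReal.ofReal ((1+x)^q) ≤ ENNReal.ofReal 1 := ENNReal.ofReal_le_ofReal this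
          _ = 1 := ENNReal.ofReal_one
      simpa using this
    have h2 : (∫⁻ l in Set.Ioi (1:ℝ), ENNReal.ofReal ((1 + l) ^ q)) < ⊤ := by
      have hint : IntegrableOn (fun x : ℝ => x ^ q) (Set.Ioi 1) :=
        integrableOn_Ioi_rpow_of_lt hq one_pos
      have hfin : (∫⁻ l in Set.Ioi (1:ℝ), ENNReal.ofReal (l ^ q)) < ⊤ := by
        rw [← hasFiniteIntegral_iff_ofReal]
        · exact hint.hasFiniteIntegral
        · exact (ae_restrict_iff' measurableSet_Ioi).2 (ae_of_all _ fun x hx =>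
            Real.rpow_nonneg (by linarith [Set.mem_Ioi.mp hx]) _)
      refine lt_of_le_of_lt ?_ hfin
      refine setLIntegral_mono (by fun_prop) fun x hx => ?_
      have hx1 : (1:ℝ) < x := hx
      exact ENNReal.ofReal_le_ofReal
        (Real.rpow_le_rpow_of_nonpos (by linarith) (by linarith) (by linarith))
    calc _ ≤ 1 + (∫⁻ l in Set.Ioi (1:ℝ), ENNReal.ofReal ((1 + l) ^ q)) := add_le_add_left h1 _
      _ < ⊤ := by
          exact ENNReal.add_lt_top.mpr ⟨ENNReal.one_lt_top, h2⟩
  -- per n bound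
  have bound : ∀ n : ℕ+,
      (∫⁻ l in Set.Ioi (0:ℝ),
        ENNReal.ofReal ((n : ℝ) ^ 2 / ((1 + l) ^ (2 * γ) * ((n : ℝ) ^ 2 + l) ^ 2)))
      ≤ ENNReal.ofReal ((n:ℝ) ^ p) * C := by
    intro n
    have hN : (1:ℝ) ≤ (n:ℝ) := by exact_mod_cast n.one_le
    have step1 : (∫⁻ l in Set.Ioi (0:ℝ),
        ENNReal.ofReal ((n : ℝ) ^ 2 / ((1 + l) ^ (2 * γ) * ((n : ℝ) ^ 2 + l) ^ 2)))
        ≤ ∫⁻ l in Set.Ioi (0:ℝ), ENNReal.ofReal ((n:ℝ) ^ p * (1 + l) ^ q) := by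
      refine setLIntegral_mono (by fun_prop) fun x hx => ?_
      exact ENNReal.ofReal_le_ofReal (key _ _ hN hx)
    refine step1.trans ?_
    have : ∀ x : ℝ, ENNReal.ofReal ((n:ℝ) ^ p * (1 + x) ^ q)
        = ENNReal.ofReal ((n:ℝ) ^ p) * ENNReal.ofReal ((1 + x) ^ q) := fun x =>
      ENNReal.ofReal_mul (Real.rpow_nonneg (by positivity) _)
    simp_rw [this]
    rw [lintegral_const_mul' _ _ ENNReal.ofReal_ne_top]
  -- sum of n^p is finite
  have hsum : (∑' n : ℕ+, ENNReal.ofReal ((n:ℝ) ^ p)) < ⊤ := by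
    have hle : (∑' n : ℕ+, ENNReal.ofReal ((n:ℝ) ^ p))
        ≤ ∑' k : ℕ, ENNReal.ofReal ((k:ℝ) ^ p) := by
      have := ENNReal.tsum_comp_le_tsum_of_injective
        (f := fun n : ℕ+ => (n : ℕ)) (fun x y h => by exact_mod_cast PNat.coe_injective h)
        (fun k : ℕ => ENNReal.ofReal ((k:ℝ) ^ p))
      simpa using this
    have hsummable : Summable (fun k : ℕ => (k:ℝ) ^ p) :=
      (Real.summable_nat_rpow).2 hp
    have : (∑' k : ℕ, ENNReal.ofReal ((k:ℝ) ^ p)) < ⊤ := by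
      rw [← ENNReal.ofReal_tsum_of_nonneg (fun k => Real.rpow_nonneg (Nat.cast_nonneg k) _)
        hsummable]
      exact ENNReal.ofReal_lt_top
    exact lt_of_le_of_lt hle this
  calc (∑' n : ℕ+, ∫⁻ l in Set.Ioi (0 : ℝ),
        ENNReal.ofReal ((n : ℝ) ^ 2 / ((1 + l) ^ (2 * γ) * ((n : ℝ) ^ 2 + l) ^ 2)))
      ≤ ∑' n : ℕ+, ENNReal.ofReal ((n:ℝ) ^ p) * C := ENNReal.tsum_le_tsum bound
    _ = (∑' n : ℕ+, ENNReal.ofReal ((n:ℝ) ^ p)) * C := ENNReal.tsum_mul_right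
    _ < ⊤ := ENNReal.mul_lt_top hsum hC
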